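/- Let d : ℕ and s ∈ ℝ. On MvPolynomial (Fin d) ℝ, conjugating the Euler operator by the heat operator gives the number operator: for every polynomial p, e^{-sΔ/2}(D(e^{sΔ/2} p)) = D p - s • Δ p, where D p = ∑_{i : Fin d} X_i * pderiv i p. -/

import Mathlib

open MvPolynomial

/-- The Laplacian `Δ p = ∑ i, ∂²p/∂x_i²` on polynomials in `d` variables. -/
noncomputable def mvLaplacian {d : ℕ} (p : MvPolynomial (Fin d) ℝ) :
    MvPolynomial (Fin d) ℝ :=
  ∑ i : Fin d, pderiv i (pderiv i p)

/-- The heat operator `e^{tΔ/2} p = ∑_{k ≤ totalDegree p} ((t/2)^k / k!) • Δ^k p`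
(a terminating series, since `Δ` is locally nilpotent). -/
noncomputable def heatOp {d : ℕ} (t : ℝ) (p : MvPolynomial (Fin d) ℝ) :
    MvPolynomial (Fin d) ℝ :=
  ∑ k ∈ Finset.range (p.totalDegree + 1),
    ((t / 2) ^ k / (k.factorial : ℝ)) • (mvLaplacian (d := d))^[k] p

/-- The Euler operator `D p = ∑ i, X_i ∂p/∂x_i` on polynomials in `d` variables. -/
noncomputable def eulerOp {d : ℕ} (p : MvPolynomial (Fin d) ℝ) :
    MvPolynomial (Fin d) ℝ :=
  ∑ i : Fin d, X i * pderiv i p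

variable {d : ℕ}

lemma pderiv_comm' (i j : Fin d) (p : MvPolynomial (Fin d) ℝ) :
    pderiv i (pderiv j p) = pderiv j (pderiv i p) := by
  induction p using MvPolynomial.induction_on' with
  | add p q hp hq => simp [hp, hq]
  | monomial u a =>
    rcases eq_or_ne i j with rfl | hij
    · rfl
    · simp only [pderiv_monomial, Finsupp.tsub_apply, Finsupp.single_eq_of_ne hij,
        Finsupp.single_eq_of_ne (Ne.symm hij), tsub_zero]
      rw [tsub_right_comm]
      congr 1
      ring

noncomputable def lapLM (d : ℕ) : Module.End ℝ (MvPolynomial (Fin d) ℝ) :=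
  ∑ i : Fin d, ((pderiv i).toLinearMap ∘ₗ (pderiv i).toLinearMap)

lemma lapLM_apply (p : MvPolynomial (Fin d) ℝ) : lapLM d p = mvLaplacian p := by
  simp [lapLM, mvLaplacian]

lemma iter_eq (k : ℕ) (p : MvPolynomial (Fin d) ℝ) :
    (mvLaplacian (d := d))^[k] p = (lapLM d ^ k) p := by
  have h : mvLaplacian (d := d) = ⇑(lapLM d) := funext fun r => (lapLM_apply r).symm
  rw [Module.End.pow_apply, h]

noncomputable def eulerLM (d : ℕ) : Module.End ℝ (MvPolynomial (Fin d) ℝ) :=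
  ∑ i : Fin d, (LinearMap.mulLeft ℝ (X i)) ∘ₗ (pderiv i).toLinearMap

lemma eulerLM_apply (p : MvPolynomial (Fin d) ℝ) : eulerLM d p = eulerOp p := by
  simp [eulerLM, eulerOp]

lemma td_pderiv (i : Fin d) (p : MvPolynomial (Fin d) ℝ) :
    (pderiv i p).totalDegree ≤ p.totalDegree - 1 := by
  conv_lhs => rw [p.as_sum]
  rw [map_sum]
  refine totalDegree_finsetSum_le fun s hs => ?_
  rw [pderiv_monomial]
  rcases eq_or_ne (s i) 0 with h0 | h0
  · simp [h0]
  · refine (totalDegree_monomial_le _ _).trans ?_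
    show ((s - Finsupp.single i 1).sum fun _ e => e) ≤ _
    have hle : Finsupp.single i 1 ≤ s := by
      rw [Finsupp.single_le_iff]; omega
    have hsum : ((s - Finsupp.single i 1).sum fun _ e => e) + 1 = s.sum fun _ e => e := by
      have h1 : s - Finsupp.single i 1 + Finsupp.single i 1 = s := tsub_add_cancel_of_le hle
      calc ((s - Finsupp.single i 1).sum fun _ e => e) + 1
          = ((s - Finsupp.single i 1).sum fun _ e => e)
            + ((Finsupp.single i 1).sum fun _ e => e) := by
            rw [Finsupp.sum_single_index]; rfl
        _ = ((s - Finsupp.single i 1 + Finsupp.single i 1).sum fun _ e => e) := by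
            rw [Finsupp.sum_add_index'] <;> simp
        _ = s.sum fun _ e => e := by rw [h1]
    have hdeg := le_totalDegree hs
    omega

lemma pderiv_td0 (i : Fin d) (p : MvPolynomial (Fin d) ℝ) (h : p.totalDegree = 0) :
    pderiv i p = 0 := by
  conv_lhs => rw [p.as_sum]
  rw [map_sum]
  refine Finset.sum_eq_zero fun s hs => ?_
  have h1 : (s.sum fun _ e => e) = 0 := le_antisymm (h ▸ le_totalDegree hs) (Nat.zero_le _)
  have h2 : s i = 0 := by
    by_contra hc
    have hmem : i ∈ s.support := Finsupp.mem_support_iff.2 hc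
    have : s i ≤ s.sum fun _ e => e :=
      Finset.single_le_sum (f := fun a => s a) (fun _ _ => Nat.zero_le _) hmem
    omega
  rw [pderiv_monomial, h2]
  simp

lemma lap_pow_zero : ∀ (k : ℕ) (p : MvPolynomial (Fin d) ℝ), p.totalDegree < k →
    (lapLM d ^ k) p = 0 := by
  intro k
  induction k with
  | zero => intro p h; omega
  | succ k ih =>
    intro p h
    rw [pow_succ, Module.End.mul_apply]
    rcases Nat.eq_zero_or_pos p.totalDegree with h0 | hpos
    · have hz : lapLM d p = 0 := by
        rw [lapLM_apply]
        exact Finset.sum_eq_zero fun i _ => by rw [pderiv_td0 i p h0, map_zero]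
      rw [hz, map_zero]
    · apply ih
      have h1 : (lapLM d p).totalDegree ≤ p.totalDegree - 1 := by
        rw [lapLM_apply]
        refine totalDegree_finsetSum_le fun i _ => ?_
        have a := td_pderiv i (pderiv i p)
        have b := td_pderiv i p
        omega
      omega

lemma aux3 (i : Fin d) (q : MvPolynomial (Fin d) ℝ) :
    ∑ j : Fin d, pderiv j (pderiv j (X i * q)) = 2 • pderiv i q + X i * mvLaplacian q := by
  have h : ∀ j : Fin d, pderiv j (pderiv j (X i * q)) =
      (if j = i then 2 • pderiv i q else 0) + X i * pderiv j (pderiv j q) := by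
    intro j
    rcases eq_or_ne j i with rfl | hji
    · simp only [if_pos rfl, eq_self_iff_true, if_true, pderiv_mul, pderiv_X_self, one_mul,
        map_add, two_smul]
      ring
    · simp only [if_neg hji, pderiv_mul, pderiv_X_of_ne (Ne.symm hji), zero_mul, zero_add,
        map_add, zero_add]
  rw [Finset.sum_congr rfl fun j _ => h j, Finset.sum_add_distrib, Finset.sum_ite_eq',
    if_pos (Finset.mem_univ i), ← Finset.mul_sum, mvLaplacian]

lemma comm1 (p : MvPolynomial (Fin d) ℝ) :
    mvLaplacian (eulerOp p) = eulerOp (mvLaplacian p) + 2 • mvLaplacian p := by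
  have hswap : ∀ i : Fin d, mvLaplacian (pderiv i p) = pderiv i (mvLaplacian p) := by
    intro i
    unfold mvLaplacian
    rw [map_sum]
    refine Finset.sum_congr rfl fun j _ => ?_
    rw [pderiv_comm' j i p, pderiv_comm' j i (pderiv j p)]
  calc mvLaplacian (eulerOp p)
      = ∑ j : Fin d, ∑ i : Fin d, pderiv j (pderiv j (X i * pderiv i p)) := by
        unfold mvLaplacian eulerOp; simp [map_sum]
    _ = ∑ i : Fin d, ∑ j : Fin d, pderiv j (pderiv j (X i * pderiv i p)) := Finset.sum_comm
    _ = ∑ i : Fin d, (2 • pderiv i (pderiv i p) + X i * mvLaplacian (pderiv i p)) :=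
        Finset.sum_congr rfl fun i _ => aux3 i (pderiv i p)
    _ = eulerOp (mvLaplacian p) + 2 • mvLaplacian p := by
        rw [Finset.sum_add_distrib, ← Finset.smul_sum, add_comm]
        congr 1
        · unfold eulerOp
          exact Finset.sum_congr rfl fun i _ => by rw [hswap i]

lemma commE : lapLM d * eulerLM d = eulerLM d * lapLM d + 2 • lapLM d := by
  refine LinearMap.ext fun p => ?_
  simpa only [Module.End.mul_apply, LinearMap.add_apply, LinearMap.smul_apply,
    lapLM_apply, eulerLM_apply] using comm1 p

lemma commIter (k : ℕ) :
    lapLM d ^ k * eulerLM d = eulerLM d * lapLM d ^ k + (2 * k) • lapLM d ^ k := by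
  induction k with
  | zero => simp
  | succ k ih =>
    have h1 : lapLM d ^ (k + 1) * eulerLM d = lapLM d * (lapLM d ^ k * eulerLM d) := by
      rw [← mul_assoc, ← pow_succ']
    rw [h1, ih, mul_add, ← mul_assoc, commE, mul_smul_comm, add_mul, smul_mul_assoc,
      mul_assoc, ← pow_succ', add_assoc, ← add_smul]
    have h2 : 2 + 2 * k = 2 * (k + 1) := by omega
    rw [h2]

noncomputable def HS (d : ℕ) (t : ℝ) (N : ℕ) : Module.End ℝ (MvPolynomial (Fin d) ℝ) :=
  ∑ k ∈ Finset.range N, ((t / 2) ^ k / (k.factorial : ℝ)) • (lapLM d ^ k)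

lemma HS_apply (t : ℝ) (N : ℕ) (p : MvPolynomial (Fin d) ℝ) :
    HS d t N p = ∑ k ∈ Finset.range N, ((t / 2) ^ k / (k.factorial : ℝ)) • (lapLM d ^ k) p := by
  simp [HS]

lemma heatOp_eq_HS (t : ℝ) {N : ℕ} {p : MvPolynomial (Fin d) ℝ} (h : p.totalDegree < N) :
    heatOp t p = HS d t N p := by
  rw [heatOp, HS_apply]
  have h1 : ∀ k ∈ Finset.range (p.totalDegree + 1),
      ((t / 2) ^ k / (k.factorial : ℝ)) • (mvLaplacian (d := d))^[k] p
        = ((t / 2) ^ k / (k.factorial : ℝ)) • (lapLM d ^ k) p := fun k _ => by rw [iter_eq]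
  rw [Finset.sum_congr rfl h1]
  refine Finset.sum_subset (Finset.range_subset_range.2 (by omega)) fun k _ hk => ?_
  rw [lap_pow_zero k p (by simpa using hk), smul_zero]

lemma HS_ext (t : ℝ) {N M : ℕ} (hNM : N ≤ M) {q : MvPolynomial (Fin d) ℝ}
    (hq : ∀ k, N ≤ k → (lapLM d ^ k) q = 0) : HS d t N q = HS d t M q := by
  rw [HS_apply, HS_apply]
  refine Finset.sum_subset (Finset.range_subset_range.2 hNM) fun k _ hk => ?_
  rw [hq k (by simpa using hk), smul_zero]

lemma expAux (x y : ℝ) (n : ℕ) :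
    ∑ k ∈ Finset.range (n + 1), x ^ k / (k.factorial : ℝ)
      * (y ^ (n - k) / ((n - k).factorial : ℝ)) = (x + y) ^ n / (n.factorial : ℝ) := by
  rw [add_pow, Finset.sum_div]
  refine Finset.sum_congr rfl fun k hk => ?_
  have hkn : k ≤ n := Nat.lt_succ_iff.1 (Finset.mem_range.1 hk)
  have hcast : ((n.choose k : ℝ)) * (k.factorial : ℝ) * ((n - k).factorial : ℝ)
      = (n.factorial : ℝ) := by
    exact_mod_cast congrArg (Nat.cast (R := ℝ)) (Nat.choose_mul_factorial_mul_factorial hkn)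
  have hk0 : (k.factorial : ℝ) ≠ 0 := Nat.cast_ne_zero.2 k.factorial_ne_zero
  have hnk0 : ((n - k).factorial : ℝ) ≠ 0 := Nat.cast_ne_zero.2 (n - k).factorial_ne_zero
  have hn0 : (n.factorial : ℝ) ≠ 0 := Nat.cast_ne_zero.2 n.factorial_ne_zero
  field_simp
  linear_combination (-(x ^ k * y ^ (n - k))) * hcast

lemma HS_inv (t : ℝ) {L : ℕ} (hL : 0 < L) {q : MvPolynomial (Fin d) ℝ}
    (hq : ∀ k, L ≤ k → (lapLM d ^ k) q = 0) :
    HS d (-t) L (HS d t L q) = q := by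
  have expand : HS d (-t) L (HS d t L q) =
      ∑ m ∈ Finset.range L, ∑ k ∈ Finset.range L,
        ((-t / 2) ^ m / (m.factorial : ℝ) * ((t / 2) ^ k / (k.factorial : ℝ)))
          • (lapLM d ^ (m + k)) q := by
    rw [HS_apply]
    refine Finset.sum_congr rfl fun m _ => ?_
    rw [HS_apply, map_sum, Finset.smul_sum]
    refine Finset.sum_congr rfl fun k _ => ?_
    rw [map_smul, smul_smul, pow_add, Module.End.mul_apply]
  rw [expand]
  have h1 : ∀ m ∈ Finset.range L,
      (∑ k ∈ Finset.range L, ((-t / 2) ^ m / (m.factorial : ℝ)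
          * ((t / 2) ^ k / (k.factorial : ℝ))) • (lapLM d ^ (m + k)) q)
      = ∑ k ∈ Finset.range (L - m), ((-t / 2) ^ m / (m.factorial : ℝ)
          * ((t / 2) ^ k / (k.factorial : ℝ))) • (lapLM d ^ (m + k)) q := by
    intro m hm
    refine (Finset.sum_subset (Finset.range_subset_range.2 (Nat.sub_le L m)) fun k hk hk' => ?_).symm
    simp only [Finset.mem_range, not_lt] at hk'
    rw [hq (m + k) (by omega), smul_zero]
  rw [Finset.sum_congr rfl h1,
    ← Finset.sum_range_diag_flip L (fun m k => ((-t / 2) ^ m / (m.factorial : ℝ)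
      * ((t / 2) ^ k / (k.factorial : ℝ))) • (lapLM d ^ (m + k)) q)]
  have h2 : ∀ n ∈ Finset.range L,
      (∑ k ∈ Finset.range (n + 1), ((-t / 2) ^ k / (k.factorial : ℝ)
          * ((t / 2) ^ (n - k) / ((n - k).factorial : ℝ))) • (lapLM d ^ (k + (n - k))) q)
      = if n = 0 then q else 0 := by
    intro n _
    have h3 : ∀ k ∈ Finset.range (n + 1), ((-t / 2) ^ k / (k.factorial : ℝ)
          * ((t / 2) ^ (n - k) / ((n - k).factorial : ℝ))) • (lapLM d ^ (k + (n - k))) q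
        = ((-t / 2) ^ k / (k.factorial : ℝ)
          * ((t / 2) ^ (n - k) / ((n - k).factorial : ℝ))) • (lapLM d ^ n) q := fun k hk => by
      rw [Nat.add_sub_cancel' (Nat.lt_succ_iff.1 (Finset.mem_range.1 hk))]
    rw [Finset.sum_congr rfl h3, ← Finset.sum_smul, expAux]
    have h0 : (-t / 2 + t / 2 : ℝ) = 0 := by ring
    rw [h0]
    rcases n with _ | n
    · simp
    · simp [zero_pow]
  rw [Finset.sum_congr rfl h2]
  simp [Finset.sum_ite_eq', hL]


/-- Conjugating the Euler operator by the heat operator yields the number operator: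
`e^{-sΔ/2} D e^{sΔ/2} = D - sΔ`. -/
theorem heatOp_conj_euler (d : ℕ) (s : ℝ) (p : MvPolynomial (Fin d) ℝ) :
    heatOp (-s) (eulerOp (heatOp s p)) = eulerOp p - s • mvLaplacian p := by
  classical
  set K := p.totalDegree + 1 with hK
  set q : MvPolynomial (Fin d) ℝ := eulerOp p - s • mvLaplacian p with hqdef
  have hp0 : ∀ k, K ≤ k → (lapLM d ^ k) p = 0 := fun k hk => lap_pow_zero k p (by omega)
  have hDp0 : ∀ k, K ≤ k → (lapLM d ^ k) (eulerOp p) = 0 := by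
    intro k hk
    have h := LinearMap.congr_fun (commIter (d := d) k) p
    simpa only [Module.End.mul_apply, LinearMap.add_apply, LinearMap.smul_apply,
      eulerLM_apply, hp0 k hk, map_zero, smul_zero, add_zero] using h
  have hlapP : ∀ (k : ℕ), (lapLM d ^ k) (mvLaplacian p) = (lapLM d ^ (k + 1)) p := by
    intro k
    rw [pow_succ, Module.End.mul_apply, lapLM_apply]
  have hq0 : ∀ k, K ≤ k → (lapLM d ^ k) q = 0 := by
    intro k hk
    rw [hqdef, map_sub, map_smul, hDp0 k hk, hlapP, hp0 (k + 1) (by omega), smul_zero, sub_zero]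
  have hheat : heatOp s p = HS d s K p := heatOp_eq_HS s (by omega)
  have hE : eulerOp (heatOp s p) = HS d s K q := by
    rw [hheat, ← eulerLM_apply, HS_apply, map_sum]
    have st : ∀ k ∈ Finset.range K,
        eulerLM d (((s / 2) ^ k / (k.factorial : ℝ)) • (lapLM d ^ k) p)
        = ((s / 2) ^ k / (k.factorial : ℝ)) • (lapLM d ^ k) (eulerOp p)
          - (((s / 2) ^ k / (k.factorial : ℝ)) * ((2 * k : ℕ) : ℝ)) • (lapLM d ^ k) p := by
      intro k _
      have h := LinearMap.congr_fun (commIter (d := d) k) p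
      simp only [Module.End.mul_apply, LinearMap.add_apply, LinearMap.smul_apply,
        eulerLM_apply] at h
      have h2 : eulerOp ((lapLM d ^ k) p)
          = (lapLM d ^ k) (eulerOp p) - (2 * k) • (lapLM d ^ k) p :=
        eq_sub_iff_add_eq.2 h.symm
      rw [map_smul, eulerLM_apply, h2, smul_sub,
        ← Nat.cast_smul_eq_nsmul ℝ (2 * k) ((lapLM d ^ k) p), smul_smul]
    rw [Finset.sum_congr rfl st, Finset.sum_sub_distrib]
    have hext : HS d s K (mvLaplacian p) = HS d s p.totalDegree (mvLaplacian p) :=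
      (HS_ext s (by omega) fun j hj => by rw [hlapP]; exact hp0 (j + 1) (by omega)).symm
    have hsecond : ∑ k ∈ Finset.range K,
        (((s / 2) ^ k / (k.factorial : ℝ)) * ((2 * k : ℕ) : ℝ)) • (lapLM d ^ k) p
        = s • HS d s K (mvLaplacian p) := by
      rw [hext, HS_apply, Finset.smul_sum, hK, Finset.sum_range_succ']
      simp only [Nat.mul_zero, Nat.cast_zero, mul_zero, zero_smul, add_zero]
      refine Finset.sum_congr rfl fun j hj => ?_
      rw [hlapP, smul_smul]
      congr 1
      have hfac : ((j + 1).factorial : ℝ) = (j + 1) * (j.factorial : ℝ) := by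
        rw [Nat.factorial_succ]; push_cast; ring
      have hj0 : (j.factorial : ℝ) ≠ 0 := Nat.cast_ne_zero.2 j.factorial_ne_zero
      have hj1 : ((j : ℝ) + 1) ≠ 0 := by positivity
      rw [hfac]
      push_cast
      field_simp
      ring
    rw [hsecond, ← HS_apply, hqdef, map_sub, map_smul]
  have hLK : K ≤ max ((eulerOp (heatOp s p)).totalDegree + 1) K := le_max_right _ _
  set L := max ((eulerOp (heatOp s p)).totalDegree + 1) K with hL
  have hq0L : ∀ k, L ≤ k → (lapLM d ^ k) q = 0 := fun k hk => hq0 k (le_trans hLK hk)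
  have hEL : eulerOp (heatOp s p) = HS d s L q := by
    rw [hE]; exact HS_ext s hLK hq0
  have hmain : heatOp (-s) (eulerOp (heatOp s p)) = HS d (-s) L (HS d s L q) := by
    rw [heatOp_eq_HS (-s) (N := L) (by omega), hEL]
  rw [hmain, HS_inv s (by omega) hq0L]
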